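/- Let V and E be finite types with maps s, r : E → V and adjacency matrix A, let ρ be a permutation of V, and let σ be one of the nontrivial disjoint cycles of ρ whose support S is a proper subset of V. Let V' = V \ S, let E' be the set of edges with both source and range in V', let A' be the adjacency matrix of the restricted graph, and let ρ' be the restriction of ρ to a permutation of V'. Then Σ_D (−1)^{c(D)}, summed over circuit configurations D of (V, E) with ρ_D = ρ, equals −(∏_{v ∈ S} A v (ρ v)) · Σ_{D'} (−1)^{c(D')}, the latter sum ranging over circuit configurations D' of (V', E') with induced permutation ρ'. -/

import Mathlib

open scoped Classical

/-- The adjacency matrix of the finite directed multigraph with vertices `V`, edges `E`,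
source map `s` and range map `r`: the `(v, w)` entry is the number of edges from `v` to `w`. -/
noncomputable def adjMatrix {V E : Type*} (s r : E → V) : Matrix V V ℤ :=
  Matrix.of fun v w => (Nat.card {e : E // s e = v ∧ r e = w} : ℤ)

/-- A circuit configuration: a finset of edges on which `s` and `r` are injective and
whose `s`-image equals its `r`-image.  Such finsets are precisely the unions of the
circuits of vertex-disjoint sets of directed circuits. -/
def IsCircuitConfig {V E : Type*} [DecidableEq V] (s r : E → V) (D : Finset E) : Prop :=
  Set.InjOn s ↑D ∧ Set.InjOn r ↑D ∧ D.image s = D.image r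

/-- `ρ` is the permutation induced by the finset of edges `D`: it sends `s e` to `r e`
for each `e ∈ D` and fixes every vertex outside the `s`-image of `D`. -/
def Induces {V E : Type*} [DecidableEq V] (s r : E → V) (D : Finset E)
    (ρ : Equiv.Perm V) : Prop :=
  (∀ e ∈ D, ρ (s e) = r e) ∧ ∀ v ∉ D.image s, ρ v = v

/-- The permutation induced by a circuit configuration `D` (the identity if no
permutation is induced by `D`). -/
noncomputable def inducedPerm {V E : Type*} [DecidableEq V] (s r : E → V)
    (D : Finset E) : Equiv.Perm V :=
  if h : ∃ ρ : Equiv.Perm V, Induces s r D ρ then h.choose else 1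

/-- The setoid on `V` whose classes are the orbits of the permutation `ρ`. -/
def sameCycleSetoid {V : Type*} (ρ : Equiv.Perm V) : Setoid V where
  r := ρ.SameCycle
  iseqv := ⟨fun x => Equiv.Perm.SameCycle.refl ρ x,
    Equiv.Perm.SameCycle.symm, Equiv.Perm.SameCycle.trans⟩

/-- The number of circuits of a configuration `D` with induced permutation `ρ`:
the number of orbits of `ρ` that meet the `s`-image of `D`. -/
noncomputable def numCircuits {V E : Type*} (s : E → V) (D : Finset E)
    (ρ : Equiv.Perm V) : ℕ :=
  (Quotient.mk (sameCycleSetoid ρ) '' (s '' ↑D)).ncard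

section aux
variable {V E : Type*} [DecidableEq V]

lemma induces_unique {s r : E → V} {D : Finset E} {ρ₁ ρ₂ : Equiv.Perm V}
    (h₁ : Induces s r D ρ₁) (h₂ : Induces s r D ρ₂) : ρ₁ = ρ₂ := by
  ext v
  by_cases hv : v ∈ D.image s
  · obtain ⟨e, he, rfl⟩ := Finset.mem_image.mp hv
    rw [h₁.1 e he, h₂.1 e he]
  · rw [h₁.2 v hv, h₂.2 v hv]

lemma exists_induces [Finite V] {s r : E → V} {D : Finset E}
    (hD : IsCircuitConfig s r D) : ∃ ρ, Induces s r D ρ := by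
  classical
  obtain ⟨hs, hr, him⟩ := hD
  have hex : ∀ v ∈ D.image s, ∃ e, e ∈ D ∧ s e = v := by
    intro v hv; simpa using Finset.mem_image.mp hv
  set g : V → V := fun v => if h : v ∈ D.image s then r (hex v h).choose else v with hg
  have hgid : ∀ v, v ∉ D.image s → g v = v := by
    intro v hv; simp only [hg, dif_neg hv]
  have hgim : ∀ v (h : v ∈ D.image s), g v ∈ D.image s := by
    intro v h
    rw [hg]; simp only [dif_pos h]
    rw [him]
    exact Finset.mem_image_of_mem r (hex v h).choose_spec.1
  have hginj : Function.Injective g := by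
    intro a b hab
    by_cases ha : a ∈ D.image s <;> by_cases hb : b ∈ D.image s
    · simp only [hg, dif_pos ha, dif_pos hb] at hab
      have := hr (hex a ha).choose_spec.1 (hex b hb).choose_spec.1 hab
      rw [← (hex a ha).choose_spec.2, ← (hex b hb).choose_spec.2, this]
    · exfalso; apply hb; rw [← hgid b hb, ← hab]; exact hgim a ha
    · exfalso; apply ha; rw [← hgid a ha, hab]; exact hgim b hb
    · rw [← hgid a ha, ← hgid b hb, hab]
  refine ⟨Equiv.ofBijective g (Finite.injective_iff_bijective.mp hginj), ?_, ?_⟩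
  · intro e he
    have hse : s e ∈ D.image s := Finset.mem_image_of_mem s he
    show g (s e) = r e
    simp only [hg, dif_pos hse]
    congr 1
    exact hs (hex _ hse).choose_spec.1 he (hex _ hse).choose_spec.2
  · intro v hv
    exact hgid v hv

lemma inducedPerm_eq_iff [Finite V] {s r : E → V} {D : Finset E}
    (hD : IsCircuitConfig s r D) (ρ : Equiv.Perm V) :
    inducedPerm s r D = ρ ↔ Induces s r D ρ := by
  have h := exists_induces hD
  rw [inducedPerm, dif_pos h]
  constructor
  · rintro rfl; exact h.choose_spec
  · intro hρ; exact induces_unique h.choose_spec hρ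

omit [DecidableEq V] in
lemma lift_zpow {p : V → Prop} (ρ : Equiv.Perm V) (ρ' : Equiv.Perm (Subtype p))
    (hρ' : ∀ w, (ρ' w : V) = ρ (w : V)) :
    ∀ (n : ℤ) (w : Subtype p), ((ρ' ^ n) w : V) = (ρ ^ n) (w : V) := by
  have hinv : ∀ w, (ρ'⁻¹ w : V) = ρ⁻¹ (w : V) := by
    intro w
    apply ρ.injective
    rw [← hρ' (ρ'⁻¹ w)]; simp only [Equiv.Perm.inv_def, Equiv.apply_symm_apply]
  have hnat : ∀ (n : ℕ) (w : Subtype p), ((ρ' ^ n) w : V) = (ρ ^ n) (w : V) := by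
    intro n
    induction n with
    | zero => simp
    | succ k ih =>
      intro w
      rw [pow_succ, pow_succ]
      simp only [Equiv.Perm.mul_apply]
      rw [ih, hρ']
  intro n
  cases n with
  | ofNat k => exact_mod_cast hnat k
  | negSucc k =>
    intro w
    rw [zpow_negSucc, zpow_negSucc]
    have : ∀ m : ℕ, ∀ w : Subtype p, (((ρ' ^ m)⁻¹) w : V) = ((ρ ^ m)⁻¹) (w : V) := by
      intro m
      induction m with
      | zero => simp
      | succ k ih =>
        intro w
        rw [pow_succ, pow_succ, mul_inv_rev, mul_inv_rev]
        simp only [Equiv.Perm.mul_apply]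
        rw [hinv, ih]
    exact this (k+1) w

omit [DecidableEq V] in
lemma lift_sameCycle {p : V → Prop} (ρ : Equiv.Perm V) (ρ' : Equiv.Perm (Subtype p))
    (hρ' : ∀ w, (ρ' w : V) = ρ (w : V)) (a b : Subtype p) :
    ρ'.SameCycle a b ↔ ρ.SameCycle (a : V) (b : V) := by
  constructor
  · rintro ⟨n, hn⟩
    exact ⟨n, by rw [← lift_zpow ρ ρ' hρ' n a, hn]⟩
  · rintro ⟨n, hn⟩
    refine ⟨n, Subtype.ext ?_⟩
    rw [lift_zpow ρ ρ' hρ' n a, hn]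

end aux

/-- Inductive step: let `σ` be one of the nontrivial disjoint cycles of `ρ`, with support
`S` a proper subset of `V`, and let `ρ'` be the restriction of `ρ` to the restricted graph
on `V' = V \ S` with edge set `E' = {e | s e ∉ S ∧ r e ∉ S}`.  Then the signed count of
circuit configurations inducing `ρ` equals `-(∏ v ∈ S, A v (ρ v))` times the signed count
of circuit configurations of the restricted graph inducing `ρ'`. -/
theorem signed_count_inductive_step {V E : Type*} [Fintype V] [Fintype E] [DecidableEq V]
    (s r : E → V) (ρ : Equiv.Perm V) (σ : Equiv.Perm V)
    (hσ : σ ∈ ρ.cycleFactorsFinset) (hproper : σ.support ≠ Finset.univ)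
    (ρ' : Equiv.Perm {w : V // w ∉ σ.support})
    (hρ' : ∀ w : {w : V // w ∉ σ.support}, (ρ' w : V) = ρ (w : V)) :
    ∑ D ∈ Finset.univ.filter
        (fun D : Finset E => IsCircuitConfig s r D ∧ inducedPerm s r D = ρ),
      (-1 : ℤ) ^ numCircuits s D ρ =
    -(∏ v ∈ σ.support, adjMatrix s r v (ρ v)) *
      ∑ D' ∈ Finset.univ.filter
          (fun D' : Finset {e : E // s e ∉ σ.support ∧ r e ∉ σ.support} =>
            IsCircuitConfig (fun e => (⟨s e.1, e.2.1⟩ : {w : V // w ∉ σ.support}))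
                (fun e => (⟨r e.1, e.2.2⟩ : {w : V // w ∉ σ.support})) D' ∧
              inducedPerm (fun e => (⟨s e.1, e.2.1⟩ : {w : V // w ∉ σ.support}))
                (fun e => (⟨r e.1, e.2.2⟩ : {w : V // w ∉ σ.support})) D' = ρ'),
        (-1 : ℤ) ^
          numCircuits (fun e : {e : E // s e ∉ σ.support ∧ r e ∉ σ.support} =>
            (⟨s e.1, e.2.1⟩ : {w : V // w ∉ σ.support})) D' ρ' := by
  classical
  obtain ⟨hcyc, hσρ⟩ := Equiv.Perm.mem_cycleFactorsFinset_iff.mp hσ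
  set p : E → Prop := fun e => s e ∉ σ.support ∧ r e ∉ σ.support with hpdef
  set s' : {e : E // s e ∉ σ.support ∧ r e ∉ σ.support} → {w : V // w ∉ σ.support} :=
    fun e => ⟨s e.1, e.2.1⟩ with hs'def
  set r' : {e : E // s e ∉ σ.support ∧ r e ∉ σ.support} → {w : V // w ∉ σ.support} :=
    fun e => ⟨r e.1, e.2.2⟩ with hr'def
  -- basic invariance facts
  have hρmemS : ∀ v ∈ σ.support, ρ v ∈ σ.support := by
    intro v hv
    rw [← hσρ v hv]
    exact Equiv.Perm.apply_mem_support.mpr hv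
  have hρnotS : ∀ v, v ∉ σ.support → ρ v ∉ σ.support := by
    intro v hv hρv
    apply hv
    have h1 : σ⁻¹ (ρ v) ∈ σ.support := by
      rw [← Equiv.Perm.support_inv σ]
      exact Equiv.Perm.apply_mem_support.mpr (by rw [Equiv.Perm.support_inv]; exact hρv)
    have h2 : ρ (σ⁻¹ (ρ v)) = ρ v := by
      rw [← hσρ _ h1]; simp only [Equiv.Perm.inv_def, Equiv.apply_symm_apply]
    have h3 := ρ.injective h2
    rwa [h3] at h1
  have hsc : ∀ v ∈ σ.support, ∀ w, ρ.SameCycle v w ↔ w ∈ σ.support := by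
    intro v hv w
    have hcy : σ = ρ.cycleOf v := Equiv.Perm.cycle_is_cycleOf hv hσ
    have hvρ : v ∈ ρ.support := by
      rw [Equiv.Perm.mem_support, ← hσρ v hv]
      exact Equiv.Perm.mem_support.mp hv
    constructor
    · intro h
      rw [hcy]
      exact Equiv.Perm.mem_support_cycleOf_iff.mpr ⟨h, hvρ⟩
    · intro hw
      rw [hcy] at hw
      exact (Equiv.Perm.mem_support_cycleOf_iff.mp hw).1
  obtain ⟨v₀, hv₀⟩ := hcyc.nonempty_support
  -- rewrite the filters using Induces
  have hfilt1 : (Finset.univ.filter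
      (fun D : Finset E => IsCircuitConfig s r D ∧ inducedPerm s r D = ρ)) =
      (Finset.univ.filter (fun D : Finset E => IsCircuitConfig s r D ∧ Induces s r D ρ)) := by
    apply Finset.filter_congr
    intro D _
    exact and_congr_right fun h => inducedPerm_eq_iff h ρ
  have hfilt2 : (Finset.univ.filter
      (fun D' : Finset {e : E // s e ∉ σ.support ∧ r e ∉ σ.support} =>
        IsCircuitConfig s' r' D' ∧ inducedPerm s' r' D' = ρ')) =
      (Finset.univ.filter
        (fun D' : Finset {e : E // s e ∉ σ.support ∧ r e ∉ σ.support} =>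
          IsCircuitConfig s' r' D' ∧ Induces s' r' D' ρ')) := by
    apply Finset.filter_congr
    intro D' _
    exact and_congr_right fun h => inducedPerm_eq_iff h ρ'
  rw [hfilt1, hfilt2]
  set T' := Finset.univ.filter
      (fun D' : Finset {e : E // s e ∉ σ.support ∧ r e ∉ σ.support} =>
        IsCircuitConfig s' r' D' ∧ Induces s' r' D' ρ') with hT'def
  set T₀ : Finset (Finset E) := Finset.univ.filter (fun D₀ : Finset E =>
      Set.InjOn s ↑D₀ ∧ D₀.image s = σ.support ∧ ∀ e ∈ D₀, r e = ρ (s e)) with hT₀def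
  -- forward decomposition
  have hforward : ∀ D : Finset E, IsCircuitConfig s r D → Induces s r D ρ →
      (D.filter (fun e => s e ∈ σ.support) ∈ T₀ ∧
       D.subtype p ∈ T' ∧
       numCircuits s D ρ = numCircuits s' (D.subtype p) ρ' + 1 ∧
       (D.filter (fun e => s e ∈ σ.support)) ∪
         (D.subtype p).map (Function.Embedding.subtype p) = D) := by
    intro D hc hi
    obtain ⟨hcs, hcr, him⟩ := hc
    have hre : ∀ e ∈ D, r e = ρ (s e) := fun e he => (hi.1 e he).symm
    have hSsub : σ.support ⊆ D.image s := by
      intro v hv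
      by_contra h
      have h1 := hi.2 v h
      have h2 : σ v ≠ v := Equiv.Perm.mem_support.mp hv
      exact h2 (by rw [hσρ v hv, h1])
    have hs'img : ∀ w : {w : V // w ∉ σ.support},
        w ∈ (D.subtype p).image s' ↔ (w : V) ∈ D.image s := by
      intro w
      constructor
      · intro hw
        obtain ⟨e', he', hse'⟩ := Finset.mem_image.mp hw
        rw [Finset.mem_subtype] at he'
        exact Finset.mem_image.mpr ⟨e', he', congrArg Subtype.val hse'⟩
      · intro hw
        obtain ⟨e, he, hse⟩ := Finset.mem_image.mp hw
        have h1 : s e ∉ σ.support := by rw [hse]; exact w.2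
        have h2 : r e ∉ σ.support := by rw [hre e he]; exact hρnotS _ h1
        refine Finset.mem_image.mpr ⟨⟨e, h1, h2⟩, ?_, Subtype.ext hse⟩
        rw [Finset.mem_subtype]; exact he
    have hr'img : ∀ w : {w : V // w ∉ σ.support},
        w ∈ (D.subtype p).image r' ↔ (w : V) ∈ D.image r := by
      intro w
      constructor
      · intro hw
        obtain ⟨e', he', hre'⟩ := Finset.mem_image.mp hw
        rw [Finset.mem_subtype] at he'
        exact Finset.mem_image.mpr ⟨e', he', congrArg Subtype.val hre'⟩
      · intro hw
        obtain ⟨e, he, hree⟩ := Finset.mem_image.mp hw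
        have h2 : r e ∉ σ.support := by rw [hree]; exact w.2
        have h1 : s e ∉ σ.support := by
          intro hse
          exact h2 (by rw [hre e he]; exact hρmemS _ hse)
        refine Finset.mem_image.mpr ⟨⟨e, h1, h2⟩, ?_, Subtype.ext hree⟩
        rw [Finset.mem_subtype]; exact he
    have hpart1 : D.filter (fun e => s e ∈ σ.support) ∈ T₀ := by
      rw [hT₀def, Finset.mem_filter]
      refine ⟨Finset.mem_univ _,
        hcs.mono (Finset.coe_subset.mpr (Finset.filter_subset _ _)), ?_, ?_⟩
      · ext v
        simp only [Finset.mem_image, Finset.mem_filter]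
        constructor
        · rintro ⟨e, ⟨he, hse⟩, rfl⟩
          exact hse
        · intro hv
          obtain ⟨e, he, hse⟩ := Finset.mem_image.mp (hSsub hv)
          exact ⟨e, ⟨he, by rw [hse]; exact hv⟩, hse⟩
      · intro e he
        exact hre e (Finset.mem_filter.mp he).1
    have hpart2 : D.subtype p ∈ T' := by
      rw [hT'def, Finset.mem_filter]
      refine ⟨Finset.mem_univ _, ⟨?_, ?_, ?_⟩, ?_, ?_⟩
      · intro a ha b hb hab
        rw [Finset.mem_coe, Finset.mem_subtype] at ha hb
        exact Subtype.ext (hcs ha hb (congrArg Subtype.val hab))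
      · intro a ha b hb hab
        rw [Finset.mem_coe, Finset.mem_subtype] at ha hb
        exact Subtype.ext (hcr ha hb (congrArg Subtype.val hab))
      · ext w
        rw [hs'img, hr'img, him]
      · intro e' he'
        rw [Finset.mem_subtype] at he'
        apply Subtype.ext
        rw [hρ']
        exact hi.1 e' he'
      · intro w hw
        have hw2 : (w : V) ∉ D.image s := fun h => hw ((hs'img w).mpr h)
        apply Subtype.ext
        rw [hρ']
        exact hi.2 _ hw2
    have hnum : numCircuits s D ρ = numCircuits s' (D.subtype p) ρ' + 1 := by
      set X : Set V := Subtype.val '' (s' '' ↑(D.subtype p)) with hXdef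
      have hXmem : ∀ v, v ∈ X ↔ v ∉ σ.support ∧ v ∈ s '' ↑D := by
        intro v
        constructor
        · rintro ⟨w, ⟨e', he', rfl⟩, rfl⟩
          rw [Finset.mem_coe, Finset.mem_subtype] at he'
          exact ⟨(s' e').2, ⟨e', he', rfl⟩⟩
        · rintro ⟨hv, e, he, rfl⟩
          rw [Finset.mem_coe] at he
          have h1 : s e ∉ σ.support := hv
          have h2 : r e ∉ σ.support := by rw [hre e he]; exact hρnotS _ h1
          refine ⟨s' ⟨e, h1, h2⟩, ⟨⟨e, h1, h2⟩, ?_, rfl⟩, rfl⟩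
          rw [Finset.mem_coe, Finset.mem_subtype]; exact he
      have hsplit : s '' ↑D = ↑σ.support ∪ X := by
        ext v
        constructor
        · rintro ⟨e, he, rfl⟩
          by_cases hse : s e ∈ σ.support
          · exact Or.inl hse
          · exact Or.inr ((hXmem _).mpr ⟨hse, ⟨e, he, rfl⟩⟩)
        · rintro (hv | hv)
          · obtain ⟨e, he, hse⟩ := Finset.mem_image.mp (hSsub hv)
            exact ⟨e, he, hse⟩
          · exact ((hXmem v).mp hv).2
      show (Quotient.mk (sameCycleSetoid ρ) '' (s '' ↑D)).ncard = _
      rw [hsplit, Set.image_union]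
      have hQS : Quotient.mk (sameCycleSetoid ρ) '' ↑σ.support =
          {Quotient.mk (sameCycleSetoid ρ) v₀} := by
        apply subset_antisymm
        · rintro x ⟨w, hw, rfl⟩
          rw [Finset.mem_coe] at hw
          have hsw : ρ.SameCycle w v₀ := (hsc w hw v₀).mpr hv₀
          exact Set.mem_singleton_iff.mpr (Quotient.sound hsw)
        · rintro x hx
          rw [Set.mem_singleton_iff] at hx
          exact ⟨v₀, hv₀, hx.symm⟩
      have hdisj : Disjoint (Quotient.mk (sameCycleSetoid ρ) '' ↑σ.support)
          (Quotient.mk (sameCycleSetoid ρ) '' X) := by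
        rw [Set.disjoint_left]
        rintro x ⟨a, ha, rfl⟩ ⟨b, hb, hba⟩
        rw [Finset.mem_coe] at ha
        have h1 : ρ.SameCycle a b := Quotient.exact hba.symm
        exact ((hXmem b).mp hb).1 ((hsc a ha b).mp h1)
      rw [Set.ncard_union_eq hdisj (Set.toFinite _) (Set.toFinite _), hQS, Set.ncard_singleton]
      have hg : ∀ a b : {w : V // w ∉ σ.support}, (sameCycleSetoid ρ').r a b →
          (sameCycleSetoid ρ).r (a : V) (b : V) :=
        fun a b h => (lift_sameCycle ρ ρ' hρ' a b).mp h
      have hginj : Function.Injective (Quotient.map Subtype.val hg :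
          Quotient (sameCycleSetoid ρ') → Quotient (sameCycleSetoid ρ)) := by
        intro x y
        induction x using Quotient.ind with | _ a =>
        induction y using Quotient.ind with | _ b =>
        intro h
        have h2 : Quotient.mk (sameCycleSetoid ρ) (a : V) =
            Quotient.mk (sameCycleSetoid ρ) (b : V) := by
          simpa [Quotient.map_mk] using h
        exact Quotient.sound ((lift_sameCycle ρ ρ' hρ' a b).mpr (Quotient.exact h2))
      have hQX : Quotient.mk (sameCycleSetoid ρ) '' X =
          (Quotient.map Subtype.val hg) ''
            (Quotient.mk (sameCycleSetoid ρ') '' (s' '' ↑(D.subtype p))) := by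
        have hcomm : (Quotient.mk (sameCycleSetoid ρ)) ∘ (Subtype.val) =
            (Quotient.map Subtype.val hg) ∘ (Quotient.mk (sameCycleSetoid ρ')) := by
          funext a
          simp [Quotient.map_mk, Function.comp]
        rw [hXdef, ← Set.image_comp, ← Set.image_comp, hcomm, Set.image_comp, Set.image_comp]
      rw [hQX, Set.ncard_image_of_injective _ hginj]
      have hrfl : (Quotient.mk (sameCycleSetoid ρ') '' (s' '' ↑(D.subtype p))).ncard =
          numCircuits s' (D.subtype p) ρ' := rfl
      rw [hrfl, Nat.add_comm]
    have hpart4 : (D.filter (fun e => s e ∈ σ.support)) ∪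
        (D.subtype p).map (Function.Embedding.subtype p) = D := by
      rw [Finset.subtype_map]
      ext e
      simp only [Finset.mem_union, Finset.mem_filter]
      constructor
      · rintro (⟨he, -⟩ | ⟨he, -⟩) <;> exact he
      · intro he
        by_cases hse : s e ∈ σ.support
        · exact Or.inl ⟨he, hse⟩
        · exact Or.inr ⟨he, hse, by rw [hre e he]; exact hρnotS _ hse⟩
    exact ⟨hpart1, hpart2, hnum, hpart4⟩
  -- backward composition
  have hbackward : ∀ D₀ ∈ T₀, ∀ D' ∈ T',
      (IsCircuitConfig s r (D₀ ∪ D'.map (Function.Embedding.subtype p)) ∧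
       Induces s r (D₀ ∪ D'.map (Function.Embedding.subtype p)) ρ) ∧
      ((D₀ ∪ D'.map (Function.Embedding.subtype p)).filter (fun e => s e ∈ σ.support) = D₀ ∧
       (D₀ ∪ D'.map (Function.Embedding.subtype p)).subtype p = D') := by
    intro D₀ hD₀ D' hD'
    rw [hT₀def, Finset.mem_filter] at hD₀
    obtain ⟨-, hinj₀, him₀, hr₀⟩ := hD₀
    rw [hT'def, Finset.mem_filter] at hD'
    obtain ⟨-, ⟨hcs', hcr', him'⟩, hi'⟩ := hD'
    have hSρ : σ.support.image ρ = σ.support := by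
      apply Finset.eq_of_subset_of_card_le
      · intro w hw
        obtain ⟨v, hv, rfl⟩ := Finset.mem_image.mp hw
        exact hρmemS v hv
      · rw [Finset.card_image_of_injective _ ρ.injective]
    have hBp : ∀ e ∈ D'.map (Function.Embedding.subtype p), p e := by
      intro e he
      obtain ⟨a, -, rfl⟩ := Finset.mem_map.mp he
      exact a.2
    have hBr : ∀ e ∈ D'.map (Function.Embedding.subtype p), r e = ρ (s e) := by
      intro e he
      obtain ⟨a, ha, rfl⟩ := Finset.mem_map.mp he
      have h1 := congrArg Subtype.val (hi'.1 a ha)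
      rw [hρ'] at h1
      exact h1.symm
    have hre : ∀ e ∈ D₀ ∪ D'.map (Function.Embedding.subtype p), r e = ρ (s e) := by
      intro e he
      rcases Finset.mem_union.mp he with h | h
      · exact hr₀ e h
      · exact hBr e h
    have hBs : (D'.map (Function.Embedding.subtype p)).image s =
        (D'.image s').image Subtype.val := by
      rw [Finset.map_eq_image, Finset.image_image, Finset.image_image]
      rfl
    have hBr2 : (D'.map (Function.Embedding.subtype p)).image r =
        (D'.image r').image Subtype.val := by
      rw [Finset.map_eq_image, Finset.image_image, Finset.image_image]
      rfl
    have him₀r : D₀.image r = σ.support := by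
      have h1 : D₀.image r = D₀.image (fun e => ρ (s e)) :=
        Finset.image_congr (fun e he => hr₀ e he)
      have h2 : D₀.image (fun e => ρ (s e)) = (D₀.image s).image ρ := by
        rw [Finset.image_image]; rfl
      rw [h1, h2, him₀, hSρ]
    have hsD₀ : ∀ e ∈ D₀, s e ∈ σ.support := by
      intro e he
      rw [← him₀]
      exact Finset.mem_image_of_mem s he
    have hinjs : Set.InjOn s ↑(D₀ ∪ D'.map (Function.Embedding.subtype p)) := by
      intro a ha b hb hab
      rw [Finset.coe_union, Set.mem_union] at ha hb
      rcases ha with ha | ha <;> rcases hb with hb | hb <;>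
        rw [Finset.mem_coe] at ha hb
      · exact hinj₀ ha hb hab
      · exfalso; apply (hBp b hb).1; rw [← hab]; exact hsD₀ a ha
      · exfalso; apply (hBp a ha).1; rw [hab]; exact hsD₀ b hb
      · obtain ⟨a', ha', rfl⟩ := Finset.mem_map.mp ha
        obtain ⟨b', hb', rfl⟩ := Finset.mem_map.mp hb
        have : s' a' = s' b' := Subtype.ext hab
        rw [hcs' (Finset.mem_coe.mpr ha') (Finset.mem_coe.mpr hb') this]
    have hconfig : IsCircuitConfig s r (D₀ ∪ D'.map (Function.Embedding.subtype p)) := by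
      refine ⟨hinjs, ?_, ?_⟩
      · intro a ha b hb hab
        have ha' := Finset.mem_coe.mp ha
        have hb' := Finset.mem_coe.mp hb
        have h1 : ρ (s a) = ρ (s b) := by rw [← hre a ha', ← hre b hb', hab]
        exact hinjs ha hb (ρ.injective h1)
      · rw [Finset.image_union, Finset.image_union, him₀, him₀r, hBs, hBr2, him']
    have hinduces : Induces s r (D₀ ∪ D'.map (Function.Embedding.subtype p)) ρ := by
      constructor
      · exact fun e he => (hre e he).symm
      · intro v hv
        rw [Finset.image_union, Finset.mem_union, him₀] at hv
        push_neg at hv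
        obtain ⟨hv1, hv2⟩ := hv
        have hv3 : (⟨v, hv1⟩ : {w : V // w ∉ σ.support}) ∉ D'.image s' := by
          intro h
          apply hv2
          rw [hBs]
          exact Finset.mem_image_of_mem _ h
        have h4 := congrArg Subtype.val (hi'.2 _ hv3)
        rw [hρ'] at h4
        exact h4
    have hback1 : (D₀ ∪ D'.map (Function.Embedding.subtype p)).filter
        (fun e => s e ∈ σ.support) = D₀ := by
      ext e
      simp only [Finset.mem_filter, Finset.mem_union]
      constructor
      · rintro ⟨h1 | h1, h2⟩
        · exact h1
        · exact absurd h2 (hBp e h1).1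
      · intro he
        exact ⟨Or.inl he, hsD₀ e he⟩
    have hback2 : (D₀ ∪ D'.map (Function.Embedding.subtype p)).subtype p = D' := by
      ext e'
      rw [Finset.mem_subtype, Finset.mem_union]
      constructor
      · rintro (h | h)
        · exact absurd (hsD₀ _ h) e'.2.1
        · obtain ⟨a, ha, hav⟩ := Finset.mem_map.mp h
          have haa : a = e' := Subtype.val_injective (by simpa using hav)
          exact haa ▸ ha
      · intro h
        exact Or.inr (Finset.mem_map.mpr ⟨e', h, rfl⟩)
    exact ⟨⟨hconfig, hinduces⟩, hback1, hback2⟩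
  -- cardinality of T₀
  have hT₀card : (T₀.card : ℤ) = ∏ v ∈ σ.support, adjMatrix s r v (ρ v) := by
    have huniq : ∀ D₀ ∈ T₀, ∀ v ∈ σ.support, ∃! e, e ∈ D₀ ∧ s e = v := by
      intro D₀ hD₀ v hv
      rw [hT₀def, Finset.mem_filter] at hD₀
      obtain ⟨-, hinj, him, -⟩ := hD₀
      have hvim : v ∈ D₀.image s := him ▸ hv
      obtain ⟨e, he, hse⟩ := Finset.mem_image.mp hvim
      refine ⟨e, ⟨he, hse⟩, ?_⟩
      rintro e' ⟨he', hse'⟩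
      exact hinj he' he (by rw [hse, hse'])
    have hjmem : ∀ f ∈ (σ.support.pi (fun v => Finset.univ.filter
        (fun e => s e = v ∧ r e = ρ v))),
        σ.support.attach.image (fun v => f v.1 v.2) ∈ T₀ := by
      intro f hf
      rw [Finset.mem_pi] at hf
      have hfs : ∀ (v) (hv : v ∈ σ.support), s (f v hv) = v ∧ r (f v hv) = ρ v := by
        intro v hv
        have := hf v hv
        rw [Finset.mem_filter] at this
        exact this.2
      rw [hT₀def, Finset.mem_filter]
      refine ⟨Finset.mem_univ _, ?_, ?_, ?_⟩
      · intro a ha b hb hab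
        rw [Finset.mem_coe, Finset.mem_image] at ha hb
        obtain ⟨x, -, rfl⟩ := ha
        obtain ⟨y, -, rfl⟩ := hb
        have hx := (hfs x.1 x.2).1
        have hy := (hfs y.1 y.2).1
        have hxy : x = y := Subtype.ext (by rw [← hx, ← hy, hab])
        rw [hxy]
      · rw [Finset.image_image]
        have : σ.support.attach.image ((fun e => s e) ∘ fun v => f v.1 v.2) =
            σ.support.attach.image (fun v => v.1) := by
          apply Finset.image_congr
          intro x _
          exact (hfs x.1 x.2).1
        rw [this, Finset.attach_image_val]
      · intro e he
        rw [Finset.mem_image] at he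
        obtain ⟨x, -, rfl⟩ := he
        rw [(hfs x.1 x.2).2, (hfs x.1 x.2).1]
    have hcard : T₀.card = (σ.support.pi (fun v => Finset.univ.filter
        (fun e => s e = v ∧ r e = ρ v))).card := by
      refine Finset.card_bij'
        (fun D₀ hD₀ => fun v hv => Finset.choose (fun e => s e = v) D₀ (huniq D₀ hD₀ v hv))
        (fun f _ => σ.support.attach.image (fun v => f v.1 v.2)) ?_ hjmem ?_ ?_
      · -- hi
        intro D₀ hD₀
        rw [Finset.mem_pi]
        intro v hv
        rw [Finset.mem_filter]
        have hm := Finset.choose_mem (fun e => s e = v) D₀ (huniq D₀ hD₀ v hv)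
        have hp := Finset.choose_property (fun e => s e = v) D₀ (huniq D₀ hD₀ v hv)
        rw [hT₀def, Finset.mem_filter] at hD₀
        exact ⟨Finset.mem_univ _, hp, by rw [hD₀.2.2.2 _ hm, hp]⟩
      · -- left_inv
        intro D₀ hD₀
        ext e
        rw [Finset.mem_image]
        constructor
        · rintro ⟨x, -, rfl⟩
          exact Finset.choose_mem _ _ _
        · intro he
          have hse : s e ∈ σ.support := by
            rw [hT₀def, Finset.mem_filter] at hD₀
            rw [← hD₀.2.2.1]
            exact Finset.mem_image_of_mem s he
          refine ⟨⟨s e, hse⟩, Finset.mem_attach _ _, ?_⟩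
          have hu := huniq D₀ hD₀ (s e) hse
          exact hu.unique ⟨Finset.choose_mem _ D₀ hu, Finset.choose_property _ D₀ hu⟩ ⟨he, rfl⟩
      · -- right_inv
        intro f hf
        funext v hv
        rw [Finset.mem_pi] at hf
        have hmem : f v hv ∈ σ.support.attach.image (fun v => f v.1 v.2) :=
          Finset.mem_image.mpr ⟨⟨v, hv⟩, Finset.mem_attach _ _, rfl⟩
        have hsv : s (f v hv) = v := by
          have := hf v hv
          rw [Finset.mem_filter] at this
          exact this.2.1
        have hu := huniq (σ.support.attach.image (fun v => f v.1 v.2))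
          (hjmem f (Finset.mem_pi.mpr hf)) v hv
        exact hu.unique ⟨Finset.choose_mem _ _ hu, Finset.choose_property _ _ hu⟩ ⟨hmem, hsv⟩
    have hadj : ∀ v, adjMatrix s r v (ρ v) =
        ((Finset.univ.filter (fun e => s e = v ∧ r e = ρ v)).card : ℤ) := by
      intro v
      have hn : Nat.card {e : E // s e = v ∧ r e = ρ v} =
          (Finset.univ.filter (fun e => s e = v ∧ r e = ρ v)).card := by
        rw [Nat.card_eq_fintype_card]
        exact Fintype.card_of_subtype _ (fun x => by simp)
      show ((Nat.card {e : E // s e = v ∧ r e = ρ v} : ℕ) : ℤ) = _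
      rw [hn]
    rw [hcard, Finset.card_pi]
    push_cast
    exact Finset.prod_congr rfl fun v _ => (hadj v).symm
  have hstep : ∑ D ∈ Finset.univ.filter
        (fun D : Finset E => IsCircuitConfig s r D ∧ Induces s r D ρ),
      (-1 : ℤ) ^ numCircuits s D ρ =
      ∑ q ∈ T₀ ×ˢ T', (-1 : ℤ) ^ (numCircuits s' q.2 ρ' + 1) := by
    refine Finset.sum_nbij'
      (fun D => (D.filter (fun e => s e ∈ σ.support), D.subtype p))
      (fun q => q.1 ∪ q.2.map (Function.Embedding.subtype p)) ?_ ?_ ?_ ?_ ?_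
    · intro D hD
      rw [Finset.mem_filter] at hD
      obtain ⟨h1, h2⟩ := (hforward D hD.2.1 hD.2.2)
      exact Finset.mem_product.mpr ⟨h1, h2.1⟩
    · intro q hq
      rw [Finset.mem_product] at hq
      obtain ⟨h, _⟩ := hbackward q.1 hq.1 q.2 hq.2
      exact Finset.mem_filter.mpr ⟨Finset.mem_univ _, h⟩
    · intro D hD
      rw [Finset.mem_filter] at hD
      exact (hforward D hD.2.1 hD.2.2).2.2.2
    · intro q hq
      rw [Finset.mem_product] at hq
      obtain ⟨_, h1, h2⟩ := hbackward q.1 hq.1 q.2 hq.2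
      exact Prod.ext h1 h2
    · intro D hD
      rw [Finset.mem_filter] at hD
      rw [(hforward D hD.2.1 hD.2.2).2.2.1]
  rw [hstep, Finset.sum_product]
  have hconst : ∀ D₀ ∈ T₀, ∑ q ∈ T', (-1 : ℤ) ^ (numCircuits s' q ρ' + 1) =
      -∑ q ∈ T', (-1 : ℤ) ^ (numCircuits s' q ρ') := by
    intro D₀ _
    rw [← Finset.sum_neg_distrib]
    apply Finset.sum_congr rfl
    intro q _
    rw [pow_succ]
    ring
  rw [Finset.sum_congr rfl hconst, Finset.sum_const, nsmul_eq_mul, hT₀card]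
  ring
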